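/- For every integer k ≥ 3, the graph K_{k+1,k+1} minus a perfect matching is k-connected, has independence number k+1 (in particular greater than k), and every independent set of k vertices in it is a vertex cut. -/

import Mathlib

open SimpleGraph

/-- `G - S` is disconnected: some two remaining vertices are not connected. -/
def IsVertexCut {V : Type*} (G : SimpleGraph V) (S : Set V) : Prop :=
  ¬ (G.induce Sᶜ).Preconnected

/-- `G` is `k`-connected. -/
def KConnected {V : Type*} [Fintype V] (G : SimpleGraph V) (k : ℕ) : Prop :=
  k < Fintype.card V ∧ ∀ S : Finset V, S.card < k → ¬ IsVertexCut G ↑S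

/-- `S` is an independent set of `G`. -/
def IsIndep {V : Type*} (G : SimpleGraph V) (S : Set V) : Prop :=
  S.Pairwise fun u v => ¬ G.Adj u v

/-- `K_{s,s}` minus a perfect matching: `a i` is adjacent to `b j` iff `i ≠ j`. -/
def KssMinusPM (s : ℕ) : SimpleGraph (Fin s ⊕ Fin s) where
  Adj u v := (∃ i j, i ≠ j ∧ u = Sum.inl i ∧ v = Sum.inr j) ∨
    (∃ i j, i ≠ j ∧ u = Sum.inr i ∧ v = Sum.inl j)
  symm := by
    constructor
    rintro u v (⟨i, j, h, rfl, rfl⟩ | ⟨i, j, h, rfl, rfl⟩)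
    · exact Or.inr ⟨j, i, h.symm, rfl, rfl⟩
    · exact Or.inl ⟨j, i, h.symm, rfl, rfl⟩
  loopless := by
    constructor
    rintro u (⟨i, j, h, rfl, h2⟩ | ⟨i, j, h, rfl, h2⟩) <;> simp_all

variable {n : ℕ}

lemma kss_adj_lr {i j : Fin n} : (KssMinusPM n).Adj (Sum.inl i) (Sum.inr j) ↔ i ≠ j := by
  simp [KssMinusPM]

lemma kss_adj_rl {i j : Fin n} : (KssMinusPM n).Adj (Sum.inr i) (Sum.inl j) ↔ i ≠ j := by
  simp [KssMinusPM]

lemma kss_not_adj_ll {i j : Fin n} : ¬ (KssMinusPM n).Adj (Sum.inl i) (Sum.inl j) := by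
  simp [KssMinusPM]

lemma kss_not_adj_rr {i j : Fin n} : ¬ (KssMinusPM n).Adj (Sum.inr i) (Sum.inr j) := by
  simp [KssMinusPM]

lemma ind_adj {S : Set (Fin n ⊕ Fin n)} {u v : Fin n ⊕ Fin n} (hu : u ∈ S) (hv : v ∈ S)
    (h : (KssMinusPM n).Adj u v) : ((KssMinusPM n).induce S).Adj ⟨u, hu⟩ ⟨v, hv⟩ := h

def leftS (S : Finset (Fin n ⊕ Fin n)) : Finset (Fin n) := Finset.univ.filter (fun i => Sum.inl i ∈ S)
def rightS (S : Finset (Fin n ⊕ Fin n)) : Finset (Fin n) := Finset.univ.filter (fun i => Sum.inr i ∈ S)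

lemma mem_leftS {S : Finset (Fin n ⊕ Fin n)} {i : Fin n} : i ∈ leftS S ↔ Sum.inl i ∈ S := by
  simp [leftS]
lemma mem_rightS {S : Finset (Fin n ⊕ Fin n)} {i : Fin n} : i ∈ rightS S ↔ Sum.inr i ∈ S := by
  simp [rightS]

lemma card_split (S : Finset (Fin n ⊕ Fin n)) : S.card = (leftS S).card + (rightS S).card := by
  classical
  have h1 : S = (leftS S).image Sum.inl ∪ (rightS S).image Sum.inr := by
    ext x
    rcases x with i | i <;>
      simp [leftS, rightS, Finset.mem_union, Finset.mem_image]
  conv_lhs => rw [h1]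
  rw [Finset.card_union_of_disjoint, Finset.card_image_of_injective _ Sum.inl_injective,
    Finset.card_image_of_injective _ Sum.inr_injective]
  refine Finset.disjoint_left.2 ?_
  rintro x hx hy
  simp only [Finset.mem_image] at hx hy
  obtain ⟨a, -, rfl⟩ := hx
  obtain ⟨b, -, h⟩ := hy
  cases h

lemma exists_notmem_ne {k : ℕ} (L : Finset (Fin (k+1))) (hL : L.card ≤ k - 1) (hk : 1 ≤ k)
    (i : Fin (k+1)) : ∃ m, m ≠ i ∧ m ∉ L := by
  by_contra h
  push_neg at h
  have hsub : Finset.univ.erase i ⊆ L := by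
    intro m hm
    exact h m (Finset.mem_erase.1 hm).1
  have := Finset.card_le_card hsub
  rw [Finset.card_erase_of_mem (Finset.mem_univ _), Finset.card_univ, Fintype.card_fin] at this
  omega

lemma exists_third {k : ℕ} (hk : 3 ≤ k) (i i' : Fin (k+1)) : ∃ m, m ≠ i ∧ m ≠ i' := by
  by_contra h
  push_neg at h
  have hsub : (Finset.univ : Finset (Fin (k+1))) ⊆ {i, i'} := by
    intro m _
    rcases eq_or_ne m i with rfl | hm
    · simp
    · simp [h m hm]
  have := Finset.card_le_card hsub
  have h2 : ({i, i'} : Finset (Fin (k+1))).card ≤ 2 := Finset.card_insert_le _ _ |>.trans (by simp)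
  simp [Finset.card_univ] at this
  omega

lemma reach_ll {k : ℕ} (hk : 3 ≤ k) (S : Finset (Fin (k+1) ⊕ Fin (k+1))) (hS : S.card < k)
    {i i' : Fin (k+1)} (hi : Sum.inl i ∉ S) (hi' : Sum.inl i' ∉ S)
    (pi : (Sum.inl i : Fin (k+1) ⊕ Fin (k+1)) ∈ (↑S : Set _)ᶜ)
    (pi' : (Sum.inl i' : Fin (k+1) ⊕ Fin (k+1)) ∈ (↑S : Set _)ᶜ) :
    ((KssMinusPM (k+1)).induce (↑S : Set _)ᶜ).Reachable ⟨Sum.inl i, pi⟩ ⟨Sum.inl i', pi'⟩ := by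
  classical
  rcases eq_or_ne i i' with rfl | hne
  · exact Reachable.refl _
  by_cases hj : ∃ j, Sum.inr j ∉ S ∧ j ≠ i ∧ j ≠ i'
  · obtain ⟨j, hjS, hji, hji'⟩ := hj
    have pj : (Sum.inr j : Fin (k+1) ⊕ Fin (k+1)) ∈ (↑S : Set _)ᶜ := by simpa using hjS
    exact (ind_adj pi pj (kss_adj_lr.2 hji.symm)).reachable.trans
      (ind_adj pj pi' (kss_adj_rl.2 hji')).reachable
  · push_neg at hj
    -- every j outside {i,i'} has inr j ∈ S
    have hRsub : Finset.univ \ {i, i'} ⊆ rightS S := by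
      intro j hjm
      simp only [Finset.mem_sdiff, Finset.mem_insert, Finset.mem_singleton, Finset.mem_univ,
        true_and] at hjm
      push_neg at hjm
      rw [mem_rightS]
      by_contra hc
      exact hjm.2 (hj j hc hjm.1)
    have hRcard : k - 1 ≤ (rightS S).card := by
      have := Finset.card_le_card hRsub
      have hcard : (Finset.univ \ ({i, i'} : Finset (Fin (k+1)))).card = k - 1 := by
        rw [Finset.card_sdiff_of_subset (by simp), Finset.card_univ, Fintype.card_fin,
          Finset.card_insert_of_notMem (by simpa using hne), Finset.card_singleton]
        omega
      omega
    have hsplit := card_split S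
    have hL0 : leftS S = ∅ := by
      rw [← Finset.card_eq_zero]; omega
    have hReq : rightS S = Finset.univ \ {i, i'} := by
      refine (Finset.eq_of_subset_of_card_le hRsub ?_).symm
      have hcard : (Finset.univ \ ({i, i'} : Finset (Fin (k+1)))).card = k - 1 := by
        rw [Finset.card_sdiff_of_subset (by simp), Finset.card_univ, Fintype.card_fin,
          Finset.card_insert_of_notMem (by simpa using hne), Finset.card_singleton]
        omega
      omega
    have hri : Sum.inr i ∉ S := by
      rw [← mem_rightS, hReq]; simp
    have hri' : Sum.inr i' ∉ S := by
      rw [← mem_rightS, hReq]; simp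
    obtain ⟨m, hmi, hmi'⟩ := exists_third hk i i'
    have hlm : Sum.inl m ∉ S := by
      rw [← mem_leftS, hL0]; simp
    have pri : (Sum.inr i : Fin (k+1) ⊕ Fin (k+1)) ∈ (↑S : Set _)ᶜ := by simpa using hri
    have pri' : (Sum.inr i' : Fin (k+1) ⊕ Fin (k+1)) ∈ (↑S : Set _)ᶜ := by simpa using hri'
    have plm : (Sum.inl m : Fin (k+1) ⊕ Fin (k+1)) ∈ (↑S : Set _)ᶜ := by simpa using hlm
    exact (ind_adj pi pri' (kss_adj_lr.2 hne)).reachable.trans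
      ((ind_adj pri' plm (kss_adj_rl.2 (Ne.symm hmi'))).reachable.trans
      ((ind_adj plm pri (kss_adj_lr.2 hmi)).reachable.trans
      (ind_adj pri pi' (kss_adj_rl.2 hne)).reachable))

lemma reach_rr {k : ℕ} (hk : 3 ≤ k) (S : Finset (Fin (k+1) ⊕ Fin (k+1))) (hS : S.card < k)
    {i i' : Fin (k+1)} (hi : Sum.inr i ∉ S) (hi' : Sum.inr i' ∉ S)
    (pi : (Sum.inr i : Fin (k+1) ⊕ Fin (k+1)) ∈ (↑S : Set _)ᶜ)
    (pi' : (Sum.inr i' : Fin (k+1) ⊕ Fin (k+1)) ∈ (↑S : Set _)ᶜ) :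
    ((KssMinusPM (k+1)).induce (↑S : Set _)ᶜ).Reachable ⟨Sum.inr i, pi⟩ ⟨Sum.inr i', pi'⟩ := by
  classical
  rcases eq_or_ne i i' with rfl | hne
  · exact Reachable.refl _
  by_cases hj : ∃ j, Sum.inl j ∉ S ∧ j ≠ i ∧ j ≠ i'
  · obtain ⟨j, hjS, hji, hji'⟩ := hj
    have pj : (Sum.inl j : Fin (k+1) ⊕ Fin (k+1)) ∈ (↑S : Set _)ᶜ := by simpa using hjS
    exact (ind_adj pi pj (kss_adj_rl.2 hji.symm)).reachable.trans
      (ind_adj pj pi' (kss_adj_lr.2 hji')).reachable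
  · push_neg at hj
    have hLsub : Finset.univ \ {i, i'} ⊆ leftS S := by
      intro j hjm
      simp only [Finset.mem_sdiff, Finset.mem_insert, Finset.mem_singleton, Finset.mem_univ,
        true_and] at hjm
      push_neg at hjm
      rw [mem_leftS]
      by_contra hc
      exact hjm.2 (hj j hc hjm.1)
    have hLcard : k - 1 ≤ (leftS S).card := by
      have := Finset.card_le_card hLsub
      have hcard : (Finset.univ \ ({i, i'} : Finset (Fin (k+1)))).card = k - 1 := by
        rw [Finset.card_sdiff_of_subset (by simp), Finset.card_univ, Fintype.card_fin,
          Finset.card_insert_of_notMem (by simpa using hne), Finset.card_singleton]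
        omega
      omega
    have hsplit := card_split S
    have hR0 : rightS S = ∅ := by
      rw [← Finset.card_eq_zero]; omega
    have hLeq : leftS S = Finset.univ \ {i, i'} := by
      refine (Finset.eq_of_subset_of_card_le hLsub ?_).symm
      have hcard : (Finset.univ \ ({i, i'} : Finset (Fin (k+1)))).card = k - 1 := by
        rw [Finset.card_sdiff_of_subset (by simp), Finset.card_univ, Fintype.card_fin,
          Finset.card_insert_of_notMem (by simpa using hne), Finset.card_singleton]
        omega
      omega
    have hri : Sum.inl i ∉ S := by
      rw [← mem_leftS, hLeq]; simp
    have hri' : Sum.inl i' ∉ S := by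
      rw [← mem_leftS, hLeq]; simp
    obtain ⟨m, hmi, hmi'⟩ := exists_third hk i i'
    have hlm : Sum.inr m ∉ S := by
      rw [← mem_rightS, hR0]; simp
    have pri : (Sum.inl i : Fin (k+1) ⊕ Fin (k+1)) ∈ (↑S : Set _)ᶜ := by simpa using hri
    have pri' : (Sum.inl i' : Fin (k+1) ⊕ Fin (k+1)) ∈ (↑S : Set _)ᶜ := by simpa using hri'
    have plm : (Sum.inr m : Fin (k+1) ⊕ Fin (k+1)) ∈ (↑S : Set _)ᶜ := by simpa using hlm
    exact (ind_adj pi pri' (kss_adj_rl.2 hne)).reachable.trans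
      ((ind_adj pri' plm (kss_adj_lr.2 (Ne.symm hmi'))).reachable.trans
      ((ind_adj plm pri (kss_adj_rl.2 hmi)).reachable.trans
      (ind_adj pri pi' (kss_adj_lr.2 hne)).reachable))

lemma reach_lr {k : ℕ} (hk : 3 ≤ k) (S : Finset (Fin (k+1) ⊕ Fin (k+1))) (hS : S.card < k)
    {i j : Fin (k+1)} (hi : Sum.inl i ∉ S) (hj : Sum.inr j ∉ S)
    (pi : (Sum.inl i : Fin (k+1) ⊕ Fin (k+1)) ∈ (↑S : Set _)ᶜ)
    (pj : (Sum.inr j : Fin (k+1) ⊕ Fin (k+1)) ∈ (↑S : Set _)ᶜ) :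
    ((KssMinusPM (k+1)).induce (↑S : Set _)ᶜ).Reachable ⟨Sum.inl i, pi⟩ ⟨Sum.inr j, pj⟩ := by
  classical
  rcases eq_or_ne i j with rfl | hne
  · -- need an intermediate remaining left vertex m ≠ i
    have hL : (leftS S).card ≤ k - 1 := by
      have := card_split S; omega
    obtain ⟨m, hmi, hmL⟩ := exists_notmem_ne (leftS S) hL (by omega) i
    have hm : Sum.inl m ∉ S := fun h => hmL (mem_leftS.2 h)
    have pm : (Sum.inl m : Fin (k+1) ⊕ Fin (k+1)) ∈ (↑S : Set _)ᶜ := by simpa using hm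
    exact (reach_ll hk S hS hi hm pi pm).trans (ind_adj pm pj (kss_adj_lr.2 hmi)).reachable
  · exact (ind_adj pi pj (kss_adj_lr.2 hne)).reachable

lemma precon {k : ℕ} (hk : 3 ≤ k) (S : Finset (Fin (k+1) ⊕ Fin (k+1))) (hS : S.card < k) :
    ((KssMinusPM (k+1)).induce (↑S : Set _)ᶜ).Preconnected := by
  rintro ⟨x, hx⟩ ⟨y, hy⟩
  have hx' : x ∉ S := by simpa using hx
  have hy' : y ∉ S := by simpa using hy
  rcases x with i | i <;> rcases y with j | j
  · exact reach_ll hk S hS hx' hy' hx hy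
  · exact reach_lr hk S hS hx' hy' hx hy
  · exact (reach_lr hk S hS hy' hx' hy hx).symm
  · exact reach_rr hk S hS hx' hy' hx hy

lemma exists_adj_of_reachable {V : Type*} {G : SimpleGraph V} {u v : V}
    (h : G.Reachable u v) (hne : u ≠ v) : ∃ w, G.Adj u w := by
  obtain ⟨p⟩ := h
  cases p with
  | nil => exact absurd rfl hne
  | cons h _ => exact ⟨_, h⟩


lemma indep_sides {k : ℕ} (S : Finset (Fin (k+1) ⊕ Fin (k+1)))
    (hind : IsIndep (KssMinusPM (k+1)) ↑S) :
    leftS S = ∅ ∨ rightS S = ∅ ∨ S.card ≤ 2 := by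
  classical
  by_cases hL : leftS S = ∅
  · exact Or.inl hL
  by_cases hR : rightS S = ∅
  · exact Or.inr (Or.inl hR)
  obtain ⟨a, ha⟩ := Finset.nonempty_of_ne_empty hL
  obtain ⟨b, hb⟩ := Finset.nonempty_of_ne_empty hR
  have key : ∀ x ∈ leftS S, ∀ y ∈ rightS S, x = y := by
    intro x hx y hy
    have hxy := hind (by simpa using mem_leftS.1 hx) (by simpa using mem_rightS.1 hy)
      (by simp)
    by_contra hne
    exact hxy (kss_adj_lr.2 hne)
  have hLsub : leftS S ⊆ {b} := by
    intro x hx; simp [key x hx b hb]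
  have hRsub : rightS S ⊆ {a} := by
    intro y hy; simp [(key a ha y hy).symm]
  refine Or.inr (Or.inr ?_)
  have h1 := Finset.card_le_card hLsub
  have h2 := Finset.card_le_card hRsub
  have h3 := card_split S
  simp only [Finset.card_singleton] at h1 h2
  omega

lemma indep_card_le {k : ℕ} (hk : 3 ≤ k) (S : Finset (Fin (k+1) ⊕ Fin (k+1)))
    (hind : IsIndep (KssMinusPM (k+1)) ↑S) : S.card ≤ k + 1 := by
  have hsplit := card_split S
  have hL : (leftS S).card ≤ k + 1 := by
    simpa using Finset.card_le_card (Finset.subset_univ (leftS S))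
  have hR : (rightS S).card ≤ k + 1 := by
    simpa using Finset.card_le_card (Finset.subset_univ (rightS S))
  rcases indep_sides S hind with h | h | h
  · rw [h] at hsplit; simp at hsplit; omega
  · rw [h] at hsplit; simp at hsplit; omega
  · omega

lemma indep_cut {k : ℕ} (hk : 3 ≤ k) (S : Finset (Fin (k+1) ⊕ Fin (k+1)))
    (hind : IsIndep (KssMinusPM (k+1)) ↑S) (hcard : S.card = k) :
    IsVertexCut (KssMinusPM (k+1)) ↑S := by
  classical
  have hsplit := card_split S
  rcases indep_sides S hind with hL | hR | h2
  · -- S is all on the right side: rightS S has card k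
    have hRcard : (rightS S).card = k := by rw [hL] at hsplit; simp at hsplit; omega
    have hne : rightS S ≠ Finset.univ := by
      intro h; rw [h, Finset.card_univ, Fintype.card_fin] at hRcard; omega
    obtain ⟨i, -, hi⟩ := Finset.exists_of_ssubset
      ((Finset.subset_univ (rightS S)).ssubset_of_ne hne)
    have hReq : rightS S = Finset.univ.erase i := by
      refine Finset.eq_of_subset_of_card_le ?_ ?_
      · intro x hx
        exact Finset.mem_erase.2 ⟨fun h => hi (h ▸ hx), Finset.mem_univ _⟩
      · rw [Finset.card_erase_of_mem (Finset.mem_univ _), Finset.card_univ, Fintype.card_fin]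
        omega
    have hli : Sum.inl i ∉ S := by
      rw [← mem_leftS, hL]; simp
    have hri : Sum.inr i ∉ S := fun h => hi (mem_rightS.2 h)
    have pA : (Sum.inl i : Fin (k+1) ⊕ Fin (k+1)) ∈ (↑S : Set _)ᶜ := by simpa using hli
    have pB : (Sum.inr i : Fin (k+1) ⊕ Fin (k+1)) ∈ (↑S : Set _)ᶜ := by simpa using hri
    intro hpre
    obtain ⟨⟨w, hw⟩, hadj⟩ := exists_adj_of_reachable (hpre ⟨Sum.inl i, pA⟩ ⟨Sum.inr i, pB⟩)
      (by simp [Subtype.ext_iff])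
    rcases w with m | m
    · exact kss_not_adj_ll hadj
    · have hmi : i ≠ m := kss_adj_lr.1 hadj
      have : Sum.inr m ∈ S := by
        rw [← mem_rightS, hReq]
        exact Finset.mem_erase.2 ⟨hmi.symm, Finset.mem_univ _⟩
      have hw' := hw
      simp only [Set.mem_compl_iff, Finset.mem_coe] at hw'
      exact hw' this
  · -- S is all on the left side: leftS S has card k
    have hLcard : (leftS S).card = k := by rw [hR] at hsplit; simp at hsplit; omega
    have hne : leftS S ≠ Finset.univ := by
      intro h; rw [h, Finset.card_univ, Fintype.card_fin] at hLcard; omega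
    obtain ⟨i, -, hi⟩ := Finset.exists_of_ssubset
      ((Finset.subset_univ (leftS S)).ssubset_of_ne hne)
    have hLeq : leftS S = Finset.univ.erase i := by
      refine Finset.eq_of_subset_of_card_le ?_ ?_
      · intro x hx
        exact Finset.mem_erase.2 ⟨fun h => hi (h ▸ hx), Finset.mem_univ _⟩
      · rw [Finset.card_erase_of_mem (Finset.mem_univ _), Finset.card_univ, Fintype.card_fin]
        omega
    have hri : Sum.inr i ∉ S := by
      rw [← mem_rightS, hR]; simp
    have hli : Sum.inl i ∉ S := fun h => hi (mem_leftS.2 h)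
    have pA : (Sum.inr i : Fin (k+1) ⊕ Fin (k+1)) ∈ (↑S : Set _)ᶜ := by simpa using hri
    have pB : (Sum.inl i : Fin (k+1) ⊕ Fin (k+1)) ∈ (↑S : Set _)ᶜ := by simpa using hli
    intro hpre
    obtain ⟨⟨w, hw⟩, hadj⟩ := exists_adj_of_reachable (hpre ⟨Sum.inr i, pA⟩ ⟨Sum.inl i, pB⟩)
      (by simp [Subtype.ext_iff])
    rcases w with m | m
    · have hmi : i ≠ m := kss_adj_rl.1 hadj
      have : Sum.inl m ∈ S := by
        rw [← mem_leftS, hLeq]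
        exact Finset.mem_erase.2 ⟨hmi.symm, Finset.mem_univ _⟩
      have hw' := hw
      simp only [Set.mem_compl_iff, Finset.mem_coe] at hw'
      exact hw' this
    · exact kss_not_adj_rr hadj
  · exfalso; omega

theorem stmt5 (k : ℕ) (hk : 3 ≤ k) :
    KConnected (KssMinusPM (k + 1)) k ∧
    (∃ S : Finset (Fin (k + 1) ⊕ Fin (k + 1)),
        IsIndep (KssMinusPM (k + 1)) ↑S ∧ S.card = k + 1) ∧
    (∀ S : Finset (Fin (k + 1) ⊕ Fin (k + 1)),
        IsIndep (KssMinusPM (k + 1)) ↑S → S.card ≤ k + 1) ∧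
    (∀ S : Finset (Fin (k + 1) ⊕ Fin (k + 1)),
        IsIndep (KssMinusPM (k + 1)) ↑S → S.card = k →
          IsVertexCut (KssMinusPM (k + 1)) ↑S) := by
  refine ⟨⟨?_, ?_⟩, ?_, ?_, ?_⟩
  · simp only [Fintype.card_sum, Fintype.card_fin]
    omega
  · intro S hS hcut
    exact hcut (precon hk S hS)
  · refine ⟨Finset.univ.map ⟨Sum.inl, Sum.inl_injective⟩, ?_, by simp⟩
    rintro u hu v hv hne hadj
    simp only [Finset.coe_map, Set.mem_image, Finset.coe_univ, Set.image_univ,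
      Set.mem_range, Function.Embedding.coeFn_mk] at hu hv
    obtain ⟨a, rfl⟩ := hu
    obtain ⟨b, rfl⟩ := hv
    exact kss_not_adj_ll hadj
  · intro S hS
    exact indep_card_le hk S hS
  · intro S hS hcard
    exact indep_cut hk S hS hcard
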